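/- Under the structural assumption, for every i ∈ S \ F the set S \ {i} d-separates y and t, i.e. S \ {i} ∈ 𝒜. -/

import Mathlib

/-!  A graph-theoretic framework for d-separation in a finite directed acyclic
graph with vertex set `{y, t} ∪ S`, following the paper's conventions. -/

/-- Two vertices are adjacent if there is an edge between them in either direction. -/
def Adj {V : Type*} (E : V → V → Prop) (a b : V) : Prop := E a b ∨ E b a

/-- The full vertex sequence of a candidate path between `y` and `t` whose list of
intermediate vertices is `p`. -/
def pathSeq {V : Type*} (y t : V) (p : List V) : List V := y :: (p ++ [t])

/-- `p` is the list of intermediate vertices of a path between `y` and `t`: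
consecutive vertices of the full sequence `y :: p ++ [t]` are joined by an edge of
the graph (in either direction), and all vertices of the full sequence are
pairwise distinct. -/
def IsPath {V : Type*} (E : V → V → Prop) (y t : V) (p : List V) : Prop :=
  List.Chain' (Adj E) (pathSeq y t p) ∧ (pathSeq y t p).Nodup

/-- `v` is a collider of the path: it is an intermediate vertex and both edges of
the path adjacent to it point into it. -/
def IsCollider {V : Type*} (E : V → V → Prop) (y t : V) (p : List V) (v : V) : Prop :=
  v ∈ p ∧ ∃ a b, [a, v, b] <:+: pathSeq y t p ∧ E a v ∧ E b v

/-- `v` is a non-collider of the path: an intermediate vertex that is not a collider. -/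
def IsNonCollider {V : Type*} (E : V → V → Prop) (y t : V) (p : List V) (v : V) : Prop :=
  v ∈ p ∧ ¬ IsCollider E y t p v

/-- `d` is a descendant of `c`: there is a directed path of length ≥ 1 from `c` to `d`. -/
def Descendant {V : Type*} (E : V → V → Prop) (c d : V) : Prop := Relation.TransGen E c d

/-- The path with intermediate vertices `p` is blocked by the set `A`: some
non-collider of the path belongs to `A`, or some collider `c` of the path is such
that neither `c` nor any descendant of `c` belongs to `A`. -/
def Blocked {V : Type*} (E : V → V → Prop) (y t : V) (A : Set V) (p : List V) : Prop :=
  (∃ v, IsNonCollider E y t p v ∧ v ∈ A) ∨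
    (∃ c, IsCollider E y t p c ∧ c ∉ A ∧ ∀ d, Descendant E c d → d ∉ A)

/-- `A` d-separates `y` and `t`: `A ⊆ S` and every path between `y` and `t` is
blocked by `A`.  (`A ∈ 𝒜` in the paper's notation.) -/
def DSep {V : Type*} (E : V → V → Prop) (y t : V) (S A : Set V) : Prop :=
  A ⊆ S ∧ ∀ p, IsPath E y t p → Blocked E y t A p

/-- The directed graph is acyclic. -/
def Acyclic {V : Type*} (E : V → V → Prop) : Prop := ∀ v, ¬ Relation.TransGen E v v

/-- Structural assumption: every edge incident to `y` has head `y` and tail in `S`,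
and every edge incident to `t` has head `t` and tail in `S`. -/
def Structural {V : Type*} (E : V → V → Prop) (y t : V) (S : Set V) : Prop :=
  (∀ a, ¬ E y a) ∧ (∀ a, ¬ E t a) ∧ (∀ a, E a y → a ∈ S) ∧ (∀ a, E a t → a ∈ S)

/-- `A` is a locally minimal element of `𝒜`: it d-separates `y` and `t` and no
proper subset of it does. -/
def LocallyMinimal {V : Type*} (E : V → V → Prop) (y t : V) (S A : Set V) : Prop :=
  DSep E y t S A ∧ ∀ B, B ⊂ A → ¬ DSep E y t S B

/-- `A ∈ 𝒩`: `A` d-separates `y` and `t` and so does every `B` with `A ⊆ B ⊆ S`. -/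
def InN {V : Type*} (E : V → V → Prop) (y t : V) (S A : Set V) : Prop :=
  DSep E y t S A ∧ ∀ B, A ⊆ B → B ⊆ S → DSep E y t S B

lemma no_self_infix {V : Type*} {v a : V} {r s e : List V}
    (hnd : (v :: r).Nodup) (h : v :: r = s ++ a :: v :: e) : False := by
  cases s with
  | nil =>
    simp only [List.nil_append, List.cons.injEq] at h
    obtain ⟨h1, h2⟩ := h
    have : v ∈ r := h2 ▸ List.mem_cons_self (a := v) (l := e)
    exact (List.nodup_cons.mp hnd).1 this
  | cons x s' =>
    simp only [List.cons_append, List.cons.injEq] at h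
    obtain ⟨h1, h2⟩ := h
    have : v ∈ r := by rw [h2]; simp
    exact (List.nodup_cons.mp hnd).1 this

lemma collider_head {V : Type*} {E : V → V → Prop} {y v : V} {l : List V}
    (hnd : (y :: v :: l).Nodup) (hEy : ∀ a, ¬ E y a)
    {a b : V} (hinf : [a, v, b] <:+: y :: v :: l) (hav : E a v) : False := by
  obtain ⟨s, e, hs⟩ := hinf
  cases s with
  | nil =>
    simp only [List.nil_append, List.cons_append, List.cons.injEq] at hs
    obtain ⟨h1, _⟩ := hs
    exact hEy v (h1 ▸ hav)
  | cons x s' =>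
    simp only [List.cons_append, List.cons.injEq] at hs
    obtain ⟨h1, h2⟩ := hs
    exact no_self_infix (List.nodup_cons.mp hnd).2
      (show v :: l = s' ++ a :: v :: (b :: e) by rw [← h2]; simp)

/-- under the structural assumption, for every `i ∈ S \ F`, where
`F` is the set of common parents of `y` and `t`, the set `S \ {i}` d-separates
`y` and `t`. -/
theorem stmt1 {V : Type*} [Fintype V] (E : V → V → Prop) (y t : V) (S : Set V)
    (hyt : y ≠ t) (hyS : y ∉ S) (htS : t ∉ S)
    (hcover : ∀ v, v = y ∨ v = t ∨ v ∈ S)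
    (hacyc : Acyclic E)
    (hstruct : Structural E y t S) :
    ∀ i ∈ S \ {j | j ∈ S ∧ E j y ∧ E j t}, DSep E y t S (S \ {i}) := by
  obtain ⟨hEy, hEt, hpy, hpt⟩ := hstruct
  rintro i ⟨hiS, hiF⟩
  refine ⟨Set.diff_subset, ?_⟩
  rintro p ⟨hch, hnd⟩
  simp only [pathSeq] at hch hnd
  -- intermediate vertices lie in S
  have hyp : y ∉ p ++ [t] := (List.nodup_cons.mp hnd).1
  have hndp : (p ++ [t]).Nodup := (List.nodup_cons.mp hnd).2
  have hmemS : ∀ x ∈ p, x ∈ S := by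
    intro x hx
    rcases hcover x with h | h | h
    · exact absurd (List.mem_append_left _ hx) (h ▸ hyp)
    · subst h
      rcases List.nodup_append'.mp hndp with ⟨_, _, hdisj⟩
      exact absurd (List.mem_cons_self (a := x) (l := [])) (fun h' => List.disjoint_left.mp hdisj hx h')
    · exact h
  cases p with
  | nil =>
    exfalso
    simp only [List.Chain', List.nil_append, List.isChain_cons_cons, List.isChain_singleton, and_true] at hch
    rcases hch with h | h
    · exact hEy t h
    · exact hEt y h
  | cons v q =>
    have hEvy : E v y := by
      simp only [List.Chain', List.cons_append, List.isChain_cons_cons] at hch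
      rcases hch.1 with h | h
      · exact absurd h (hEy v)
      · exact h
    -- v is a non-collider
    have hncv : IsNonCollider E y t (v :: q) v := by
      refine ⟨List.mem_cons_self (a := v) (l := q), ?_⟩
      rintro ⟨-, a, b, hinf, hav, hbv⟩
      simp only [pathSeq, List.cons_append] at hinf
      exact collider_head (by simpa using hnd) hEy hinf hav
    by_cases hvi : v = i
    · -- v = i : look at the last intermediate vertex
      rcases List.eq_nil_or_concat q with rfl | ⟨r, w, rfl⟩
      · -- path y ← i → t : then i is a common parent, contradiction
        exfalso
        have hEit : E v t := by
          simp only [List.Chain', List.cons_append, List.nil_append, List.isChain_cons_cons,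
            List.isChain_singleton, and_true] at hch
          rcases hch.2 with h | h
          · exact h
          · exact absurd h (hEt v)
        exact hiF (hvi ▸ ⟨hmemS v (by simp), hEvy, hEit⟩)
      · -- last vertex w: E w t, w is a non-collider, w ≠ i
        have hwmem : w ∈ v :: r.concat w := by simp
        have hwS : w ∈ S := hmemS w hwmem
        have hwi : w ≠ i := by
          rintro rfl
          have := List.nodup_cons.mp (List.nodup_cons.mp hnd).2
          exact this.1 (by simp [List.concat_eq_append, hvi])
        have hrev : (y :: (v :: r.concat w) ++ [t]).reverse
            = t :: w :: (r.reverse ++ [v, y]) := by simp [List.concat_eq_append]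
        have hndrev : (t :: w :: (r.reverse ++ [v, y])).Nodup := by
          rw [← hrev, List.nodup_reverse]; simpa using hnd
        have hchrev : List.Chain' (flip (Adj E)) ((y :: (v :: r.concat w) ++ [t]).reverse) :=
          List.isChain_reverse.mpr hch
        have hEwt : E w t := by
          rw [hrev] at hchrev
          have h1 := (List.isChain_cons_cons.mp hchrev).1
          rcases h1 with h | h
          · exact h
          · exact absurd h (hEt w)
        have hncw : IsNonCollider E y t (v :: r.concat w) w := by
          refine ⟨hwmem, ?_⟩
          rintro ⟨-, a, b, hinf, hav, hbv⟩
          simp only [pathSeq, List.cons_append] at hinf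
          have hinf' : [b, w, a] <:+: t :: w :: (r.reverse ++ [v, y]) := by
            rw [← hrev]
            have := List.reverse_infix.mpr hinf
            simpa using this
          exact collider_head hndrev hEt hinf' hbv
        exact Or.inl ⟨w, hncw, hwS, hwi⟩
    · exact Or.inl ⟨v, hncv, hmemS v (List.mem_cons_self (a := v) (l := q)), hvi⟩
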